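/- For all integers j, j₀ with 0 ≤ j ≤ j₀ - 1 ≤ k - 2 one has (1 + (t_{j+1} + t_{j₀})/2)/(1 + t_{j+1}) ≤ (π²/8)·j₀²/(j+1)². -/

import Mathlib

open Real MeasureTheory

-- sin v / v ≤ sin u / u for 0 < u ≤ v ≤ π
lemma aux_sin_ratio {u v : ℝ} (hu : 0 < u) (huv : u ≤ v) (hv : v ≤ π) :
    u * Real.sin v ≤ v * Real.sin u := by
  have hv0 : 0 < v := lt_of_lt_of_le hu huv
  have h := strictConcaveOn_sin_Icc.concaveOn.2
    (Set.mem_Icc.2 ⟨hv0.le, hv⟩) (Set.mem_Icc.2 ⟨le_rfl, Real.pi_pos.le⟩)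
    (show (0:ℝ) ≤ u / v by positivity)
    (show (0:ℝ) ≤ 1 - u / v by
      rw [sub_nonneg]; exact div_le_one_of_le₀ huv hv0.le)
    (show u / v + (1 - u / v) = 1 by ring)
  simp only [smul_eq_mul, mul_zero, Real.sin_zero, add_zero] at h
  rw [div_mul_cancel₀ _ hv0.ne'] at h
  calc u * Real.sin v = v * (u / v * Real.sin v) := by field_simp
    _ ≤ v * Real.sin u := by
        apply mul_le_mul_of_nonneg_left _ hv0.le
        exact h

lemma aux_calc {x y : ℝ} (hx : -1 < x) (hxy : x ≤ y) (hy : y ≤ 1) :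
    (1 + y) * (Real.arcsin x + π / 2) ^ 2 ≤ (1 + x) * (Real.arcsin y + π / 2) ^ 2 := by
  set u : ℝ := (Real.arcsin x + π / 2) / 2 with hu_def
  set v : ℝ := (Real.arcsin y + π / 2) / 2 with hv_def
  have hxle1 : x ≤ 1 := hxy.trans hy
  have hy1 : -1 < y := lt_of_lt_of_le hx hxy
  have hu : 0 < u := by
    have : -(π/2) < Real.arcsin x := Real.neg_pi_div_two_lt_arcsin.2 hx
    rw [hu_def]; linarith
  have huv : u ≤ v := by
    have := Real.monotone_arcsin hxy
    rw [hu_def, hv_def]; linarith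
  have hvle : v ≤ π := by
    have := Real.arcsin_le_pi_div_two y
    rw [hv_def]; nlinarith [Real.pi_pos]
  have hxeq : 1 + x = 2 * Real.sin u ^ 2 := by
    have h2u : 2 * u = Real.arcsin x + π / 2 := by rw [hu_def]; ring
    have : Real.cos (2 * u) = -x := by
      rw [h2u, Real.cos_add_pi_div_two, Real.sin_arcsin hx.le hxle1]
    linarith [Real.cos_two_mul u, Real.sin_sq_add_cos_sq u]
  have hyeq : 1 + y = 2 * Real.sin v ^ 2 := by
    have h2v : 2 * v = Real.arcsin y + π / 2 := by rw [hv_def]; ring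
    have : Real.cos (2 * v) = -y := by
      rw [h2v, Real.cos_add_pi_div_two, Real.sin_arcsin hy1.le hy]
    linarith [Real.cos_two_mul v, Real.sin_sq_add_cos_sq v]
  have hsinv : 0 ≤ Real.sin v := Real.sin_nonneg_of_nonneg_of_le_pi (by linarith) hvle
  have hratio : u * Real.sin v ≤ v * Real.sin u := aux_sin_ratio hu huv hvle
  have hsq : (u * Real.sin v) ^ 2 ≤ (v * Real.sin u) ^ 2 :=
    pow_le_pow_left₀ (mul_nonneg hu.le hsinv) hratio 2
  have h2u : Real.arcsin x + π / 2 = 2 * u := by rw [hu_def]; ring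
  have h2v : Real.arcsin y + π / 2 = 2 * v := by rw [hv_def]; ring
  rw [h2u, h2v, hxeq, hyeq]
  nlinarith [hsq]

lemma aux_w_meas : Measurable fun s : ℝ => 1 / Real.sqrt (1 - s ^ 2) := by
  apply Measurable.div measurable_const
  exact (Real.continuous_sqrt.comp (by continuity)).measurable

lemma aux_w_int : IntervalIntegrable (fun s : ℝ => 1 / Real.sqrt (1 - s ^ 2))
    volume (-1) 1 := by
  have a1 : IntervalIntegrable (fun s : ℝ => (s + 1) ^ (-(1/2) : ℝ)) volume (-1) 1 := by
    have := (intervalIntegral.intervalIntegrable_rpow' (a := 0) (b := 2)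
      (r := -(1/2)) (by norm_num)).comp_add_right 1
    norm_num at this
    exact this
  have a2 : IntervalIntegrable (fun s : ℝ => (1 - s) ^ (-(1/2) : ℝ)) volume (-1) 1 := by
    have := (intervalIntegral.intervalIntegrable_rpow' (a := 0) (b := 2)
      (r := -(1/2)) (by norm_num)).comp_sub_left 1
    norm_num at this
    exact this.symm
  have h1 := a1.add a2
  rw [intervalIntegrable_iff_integrableOn_Ioc_of_le (by norm_num)] at h1 ⊢
  refine MeasureTheory.Integrable.mono h1 aux_w_meas.aestronglyMeasurable ?_
  filter_upwards [MeasureTheory.ae_restrict_mem measurableSet_Ioc] with s hs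
  have hs1 : 0 < 1 + s := by linarith [hs.1]
  have hs2 : 0 ≤ 1 - s := by linarith [hs.2]
  have hb : ∀ c : ℝ, 0 ≤ c → c ^ (-(1/2) : ℝ) = 1 / Real.sqrt c := by
    intro c hc
    rw [Real.rpow_neg hc, Real.sqrt_eq_rpow]
    exact (one_div _).symm
  rw [Real.norm_eq_abs, Real.norm_eq_abs, abs_of_nonneg (by positivity),
    abs_of_nonneg (add_nonneg (Real.rpow_nonneg (by linarith) _) (Real.rpow_nonneg hs2 _))]
  rw [hb (s + 1) (by linarith), hb (1 - s) hs2, show s + 1 = 1 + s by ring]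
  have hsplit : Real.sqrt (1 - s ^ 2) = Real.sqrt (1 + s) * Real.sqrt (1 - s) := by
    rw [← Real.sqrt_mul hs1.le]; ring_nf
  rw [hsplit]
  rcases le_or_gt s 0 with h | h
  · have h1s : (1:ℝ) ≤ Real.sqrt (1 - s) := (Real.le_sqrt' one_pos).2 (by nlinarith)
    have key : 1 / (Real.sqrt (1 + s) * Real.sqrt (1 - s)) ≤ 1 / Real.sqrt (1 + s) := by
      apply div_le_div_of_nonneg_left one_pos.le (by positivity)
      nlinarith [Real.sqrt_pos.2 hs1, Real.sqrt_nonneg (1 - s)]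
    have h2 : (0:ℝ) ≤ 1 / Real.sqrt (1 - s) := by positivity
    linarith
  · rcases eq_or_lt_of_le hs2 with h2 | h2
    · rw [← h2]
      simp
    have h1s : (1:ℝ) ≤ Real.sqrt (1 + s) := (Real.le_sqrt' one_pos).2 (by nlinarith)
    have key : 1 / (Real.sqrt (1 + s) * Real.sqrt (1 - s)) ≤ 1 / Real.sqrt (1 - s) := by
      apply div_le_div_of_nonneg_left one_pos.le (by positivity)
      nlinarith [Real.sqrt_pos.2 h2, Real.sqrt_nonneg (1 + s)]
    have h2' : (0:ℝ) ≤ 1 / Real.sqrt (1 + s) := by positivity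
    linarith

lemma aux_w_sub {a b : ℝ} (ha : a ∈ Set.Icc (-1:ℝ) 1) (hb : b ∈ Set.Icc (-1:ℝ) 1) :
    IntervalIntegrable (fun s : ℝ => 1 / Real.sqrt (1 - s ^ 2)) volume a b := by
  apply aux_w_int.mono_set
  apply Set.uIcc_subset_uIcc <;>
    rw [Set.uIcc_of_le (by norm_num : (-1:ℝ) ≤ 1)] <;> assumption

lemma aux_int_w_eq {x : ℝ} (hx1 : -1 ≤ x) (hx2 : x ≤ 1) :
    ∫ s in (-1:ℝ)..x, 1 / Real.sqrt (1 - s ^ 2) = Real.arcsin x + π / 2 := by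
  have hInt : IntervalIntegrable (fun s : ℝ => 1 / Real.sqrt (1 - s ^ 2)) volume (-1) x :=
    aux_w_sub (by norm_num) (Set.mem_Icc.2 ⟨hx1, hx2⟩)
  have := intervalIntegral.integral_eq_sub_of_hasDeriv_right_of_le hx1
    (f := Real.arcsin) (f' := fun s => 1 / Real.sqrt (1 - s ^ 2))
    (Real.continuous_arcsin.continuousOn)
    (fun s hs => (Real.hasDerivAt_arcsin (by linarith [hs.1]) (by
      have := hs.2; intro hcon; rw [hcon] at this; linarith)).hasDerivWithinAt)
    hInt
  rw [this, Real.arcsin_neg_one]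
  ring

theorem stmt_14 (k : ℕ) (hk : 2 ≤ k) (g : ℝ → ℝ)
    (hg0 : ∀ x ∈ Set.Icc (-1:ℝ) 1, 0 ≤ g x)
    (hgmono : MonotoneOn g (Set.Icc (-1:ℝ) 1))
    (hgconc : ConcaveOn ℝ (Set.Icc (-1:ℝ) 1) g)
    (hgconv : ConvexOn ℝ (Set.Ioo (-1:ℝ) 1) (fun s => g s / (1 + s)))
    (hnorm : (1 / π) * ∫ s in (-1:ℝ)..1, g s / Real.sqrt (1 - s ^ 2) = 1)
    (t : ℕ → ℝ)
    (ht0 : t 0 = -1) (htk : t k = 1)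
    (htmem : ∀ j ≤ k, t j ∈ Set.Icc (-1:ℝ) 1)
    (htmono : ∀ i j : ℕ, i < j → j ≤ k → t i < t j)
    (htW : ∀ j ≤ k,
      ((k : ℝ) / π) * ∫ s in (-1:ℝ)..(t j), g s / Real.sqrt (1 - s ^ 2) = (j : ℝ))
    :
    ∀ j j₀ : ℕ, j + 1 ≤ j₀ → j₀ + 1 ≤ k →
      (1 + (t (j + 1) + t j₀) / 2) / (1 + t (j + 1)) ≤
        (π ^ 2 / 8) * (j₀ : ℝ) ^ 2 / ((j : ℝ) + 1) ^ 2 := by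
  intro j j₀ hj hj0
  set x := t (j + 1) with hxdef
  set y := t j₀ with hydef
  set P : ℝ := (j : ℝ) + 1 with hPdef
  set Q : ℝ := (j₀ : ℝ) with hQdef
  have hxmem : x ∈ Set.Icc (-1:ℝ) 1 := htmem (j+1) (by omega)
  have hymem : y ∈ Set.Icc (-1:ℝ) 1 := htmem j₀ (by omega)
  have hx_gt : -1 < x := by
    have := htmono 0 (j+1) (by omega) (by omega)
    rwa [ht0] at this
  have hxy : x ≤ y := by
    rcases eq_or_lt_of_le hj with h | h
    · rw [hxdef, hydef, h]
    · exact (htmono (j+1) j₀ h (by omega)).le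
  have hy_gt : -1 < y := lt_of_lt_of_le hx_gt hxy
  have hWx := htW (j+1) (by omega)
  have hWy := htW j₀ (by omega)
  push_cast at hWx hWy
  rw [← hxdef] at hWx
  rw [← hydef] at hWy
  set f : ℝ → ℝ := fun s => g s / Real.sqrt (1 - s ^ 2) with hfdef
  have hkpos : (0:ℝ) < (k:ℝ) := by
    have : 0 < k := by omega
    exact_mod_cast this
  have hkπ : (0:ℝ) < (k:ℝ) / π := div_pos hkpos Real.pi_pos
  have hP_pos : 0 < P := by positivity
  have hQ_pos : 0 < Q := by
    have : 0 < j₀ := by omega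
    rw [hQdef]; exact_mod_cast this
  have hPQcast : P ≤ Q := by
    rw [hPdef, hQdef]
    exact_mod_cast hj
  -- integrability of f
  have hIIx : IntervalIntegrable f volume (-1) x := by
    by_contra h
    rw [intervalIntegral.integral_undef h, mul_zero] at hWx
    nlinarith [hWx, hP_pos]
  have hIIy : IntervalIntegrable f volume (-1) y := by
    by_contra h
    rw [intervalIntegral.integral_undef h, mul_zero] at hWy
    nlinarith [hWy, hQ_pos]
  have hIIxy : IntervalIntegrable f volume x y := by
    apply hIIy.mono_set
    apply Set.uIcc_subset_uIcc <;> rw [Set.uIcc_of_le (by linarith : (-1:ℝ) ≤ y)]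
    · exact ⟨hx_gt.le, hxy⟩
    · exact ⟨by linarith, le_refl _⟩
  set Vx : ℝ := ∫ s in (-1:ℝ)..x, f s with hVxdef
  set Vy : ℝ := ∫ s in (-1:ℝ)..y, f s with hVydef
  set Ax : ℝ := Real.arcsin x + π / 2 with hAxdef
  set Ay : ℝ := Real.arcsin y + π / 2 with hAydef
  clear_value Ay Ax Vy Vx f Q P y x
  have hAx_pos : 0 < Ax := by
    have := Real.neg_pi_div_two_lt_arcsin.2 hx_gt
    rw [hAxdef]; linarith
  have hAxy : Ax ≤ Ay := by
    have := Real.monotone_arcsin hxy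
    rw [hAxdef, hAydef]; linarith
  have hVx_pos : 0 < Vx := by
    by_contra h
    push_neg at h
    nlinarith [hWx, hP_pos, mul_nonpos_of_nonneg_of_nonpos hkπ.le h]
  have hVy_pos : 0 < Vy := by
    by_contra h
    push_neg at h
    nlinarith [hWy, hQ_pos, mul_nonpos_of_nonneg_of_nonpos hkπ.le h]
  -- step 2 : Vx ≤ g x * Ax
  have step2 : Vx ≤ g x * Ax := by
    have hmono : ∀ s ∈ Set.Icc (-1:ℝ) x, f s ≤ g x * (1 / Real.sqrt (1 - s ^ 2)) := by
      intro s hs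
      have hgs : g s ≤ g x := hgmono ⟨hs.1, le_trans hs.2 hxmem.2⟩ hxmem hs.2
      simp only [hfdef]
      rw [mul_one_div]
      rcases eq_or_lt_of_le (Real.sqrt_nonneg (1 - s ^ 2)) with hc | hc
      · rw [← hc, div_zero, div_zero]
      · exact (div_le_div_iff_of_pos_right hc).2 hgs
    have h1 := intervalIntegral.integral_mono_on (by linarith [hxmem.1] : (-1:ℝ) ≤ x) hIIx
      ((aux_w_sub (by norm_num) hxmem).const_mul (g x)) hmono
    rw [intervalIntegral.integral_const_mul, aux_int_w_eq hxmem.1 hxmem.2] at h1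
    rw [hVxdef, hAxdef]
    exact h1
  -- step 3 : g x * (Ay - Ax) ≤ ∫ s in x..y, f s
  have hwadd : (∫ s in (-1:ℝ)..x, 1 / Real.sqrt (1 - s ^ 2))
      + (∫ s in x..y, 1 / Real.sqrt (1 - s ^ 2))
      = ∫ s in (-1:ℝ)..y, 1 / Real.sqrt (1 - s ^ 2) :=
    intervalIntegral.integral_add_adjacent_intervals (aux_w_sub (by norm_num) hxmem)
      (aux_w_sub hxmem hymem)
  have hwxy : (∫ s in x..y, 1 / Real.sqrt (1 - s ^ 2)) = Ay - Ax := by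
    rw [aux_int_w_eq hxmem.1 hxmem.2, aux_int_w_eq hymem.1 hymem.2] at hwadd
    rw [hAxdef, hAydef]; linarith
  have step3 : g x * (Ay - Ax) ≤ ∫ s in x..y, f s := by
    have hmono : ∀ s ∈ Set.Icc x y, g x * (1 / Real.sqrt (1 - s ^ 2)) ≤ f s := by
      intro s hs
      have hsmem : s ∈ Set.Icc (-1:ℝ) 1 := ⟨le_trans hxmem.1 hs.1, le_trans hs.2 hymem.2⟩
      have hgs : g x ≤ g s := hgmono hxmem hsmem hs.1
      simp only [hfdef]
      rw [mul_one_div]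
      rcases eq_or_lt_of_le (Real.sqrt_nonneg (1 - s ^ 2)) with hc | hc
      · rw [← hc, div_zero, div_zero]
      · exact (div_le_div_iff_of_pos_right hc).2 hgs
    have h1 := intervalIntegral.integral_mono_on hxy
      ((aux_w_sub hxmem hymem).const_mul (g x)) hIIxy hmono
    rw [intervalIntegral.integral_const_mul, hwxy] at h1
    exact h1
  -- step 4
  have hVadd : Vx + (∫ s in x..y, f s) = Vy := by
    rw [hVxdef, hVydef]
    exact intervalIntegral.integral_add_adjacent_intervals hIIx hIIxy
  have h4 : Vx * Ay ≤ Vy * Ax := by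
    have e1 : Vx * (Ay - Ax) ≤ g x * Ax * (Ay - Ax) :=
      mul_le_mul_of_nonneg_right step2 (sub_nonneg.2 hAxy)
    have e2 : g x * (Ay - Ax) * Ax ≤ (∫ s in x..y, f s) * Ax :=
      mul_le_mul_of_nonneg_right step3 hAx_pos.le
    calc Vx * Ay = Vx * Ax + Vx * (Ay - Ax) := by ring
      _ ≤ Vx * Ax + g x * Ax * (Ay - Ax) := by linarith [e1]
      _ = Vx * Ax + g x * (Ay - Ax) * Ax := by ring
      _ ≤ Vx * Ax + (∫ s in x..y, f s) * Ax := by linarith [e2]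
      _ = (Vx + ∫ s in x..y, f s) * Ax := by ring
      _ = Vy * Ax := by rw [hVadd]
  have hAy_pos : 0 < Ay := lt_of_lt_of_le hAx_pos hAxy
  have h4sq : (Vx * Ay) ^ 2 ≤ (Vy * Ax) ^ 2 :=
    pow_le_pow_left₀ (mul_nonneg hVx_pos.le hAy_pos.le) h4 2
  have s5 : (1 + y) * Ax ^ 2 ≤ (1 + x) * Ay ^ 2 := by
    rw [hAxdef, hAydef]; exact aux_calc hx_gt hxy hymem.2
  have hPQ : P * Vy = Q * Vx := by
    rw [hPdef, hQdef, ← hWx, ← hWy]; ring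
  have h1x : 0 < 1 + x := by linarith
  have key : (1 + y) * P ^ 2 ≤ (1 + x) * Q ^ 2 := by
    have hc : (1 + y) * P ^ 2 * (Vy * Ax) ^ 2 ≤ (1 + x) * Q ^ 2 * (Vy * Ax) ^ 2 := by
      calc (1 + y) * P ^ 2 * (Vy * Ax) ^ 2 = ((1 + y) * Ax ^ 2) * (P * Vy) ^ 2 := by ring
        _ = ((1 + y) * Ax ^ 2) * (Q * Vx) ^ 2 := by rw [hPQ]
        _ ≤ ((1 + x) * Ay ^ 2) * (Q * Vx) ^ 2 :=
            mul_le_mul_of_nonneg_right s5 (by positivity)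
        _ = ((1 + x) * Q ^ 2) * (Vx * Ay) ^ 2 := by ring
        _ ≤ ((1 + x) * Q ^ 2) * (Vy * Ax) ^ 2 :=
            mul_le_mul_of_nonneg_left h4sq
              (mul_nonneg h1x.le (sq_nonneg _))
        _ = (1 + x) * Q ^ 2 * (Vy * Ax) ^ 2 := by ring
    exact le_of_mul_le_mul_right hc (pow_pos (mul_pos hVy_pos hAx_pos) 2)
  -- final arithmetic
  have hP2 : (0:ℝ) < P ^ 2 := pow_pos hP_pos 2
  have hPQ2 : P ^ 2 ≤ Q ^ 2 := pow_le_pow_left₀ hP_pos.le hPQcast 2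
  have hpi2 : (8:ℝ) ≤ π ^ 2 := by
    have h9 : (3:ℝ) ^ 2 ≤ π ^ 2 := pow_le_pow_left₀ (by norm_num) Real.pi_gt_three.le 2
    linarith only [h9]
  have t1 : (1 + x) * P ^ 2 ≤ (1 + x) * Q ^ 2 := mul_le_mul_of_nonneg_left hPQ2 h1x.le
  have t2 : 8 * ((1 + x) * Q ^ 2) ≤ π ^ 2 * ((1 + x) * Q ^ 2) :=
    mul_le_mul_of_nonneg_right hpi2 (mul_nonneg h1x.le (sq_nonneg _))
  rw [div_le_div_iff₀ h1x hP2]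
  have hfin : 8 * ((1 + (x + y) / 2) * P ^ 2) ≤ π ^ 2 * ((1 + x) * Q ^ 2) := by
    calc 8 * ((1 + (x + y) / 2) * P ^ 2)
        = 4 * ((1 + x) * P ^ 2) + 4 * ((1 + y) * P ^ 2) := by ring
      _ ≤ 4 * ((1 + x) * Q ^ 2) + 4 * ((1 + x) * Q ^ 2) :=
          add_le_add (mul_le_mul_of_nonneg_left t1 (by norm_num))
            (mul_le_mul_of_nonneg_left key (by norm_num))
      _ = 8 * ((1 + x) * Q ^ 2) := by ring
      _ ≤ π ^ 2 * ((1 + x) * Q ^ 2) := t2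
  linarith only [hfin]
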